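/- If a stratified formula φ is ternary and φ → φ', then exactly one of the following holds: either complexity(φ) < complexity(φ'), or complexity(φ) = complexity(φ') and atomic(φ) > atomic(φ'); similarly for rewrites of ternary stratified terms. -/

import Mathlib

/-- Atoms: pairs of a level (an integer) and an index (a natural number). -/
abbrev Atom : Type := ℤ × ℕ

/-- The level of an atom is its first component. -/
def level (a : Atom) : ℤ := a.1

mutual
/-- Pre-terms of the language of Stratified Sets, in locally nameless form
(so terms are canonical representatives of α-equivalence classes):
atoms (free variables), bound variables (de Bruijn indices), and
comprehensions `{a | φ}` recording the level of the bound atom. -/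
inductive PTerm : Type
  | atom : Atom → PTerm
  | bvar : ℕ → PTerm
  | compr : ℤ → PForm → PTerm
/-- Pre-formulae of the language of Stratified Sets: `⊥`, `¬φ`, `φ ∧ ψ`,
`∀a.φ` (recording the level of the bound atom), and `t ∈ s`. -/
inductive PForm : Type
  | bot : PForm
  | neg : PForm → PForm
  | conj : PForm → PForm → PForm
  | all : ℤ → PForm → PForm
  | mem : PTerm → PTerm → PForm
end

mutual
/-- Substitute the term `u` for the bound variable `k`. -/
def openT (k : ℕ) (u : PTerm) : PTerm → PTerm
  | .atom a => .atom a
  | .bvar j => if j = k then u else .bvar j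
  | .compr i φ => .compr i (openF (k+1) u φ)
/-- Substitute the term `u` for the bound variable `k`. -/
def openF (k : ℕ) (u : PTerm) : PForm → PForm
  | .bot => .bot
  | .neg φ => .neg (openF k u φ)
  | .conj φ ψ => .conj (openF k u φ) (openF k u ψ)
  | .all i φ => .all i (openF (k+1) u φ)
  | .mem t s => .mem (openT k u t) (openT k u s)
end

/-- The level of a (well-formed) term. -/
def levelT : PTerm → ℤ
  | .atom a => level a
  | .bvar _ => 0
  | .compr i _ => i + 1

mutual
/-- Well-formed (locally closed and stratified) terms. -/
inductive WFT : PTerm → Prop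
  | atom (a : Atom) : WFT (.atom a)
  | compr (i : ℤ) (φ : PForm) :
      (∀ n : ℕ, WFF (openF 0 (.atom (i, n)) φ)) → WFT (.compr i φ)
/-- Well-formed (locally closed and stratified) formulae: in `t ∈ s` we require
`level s = level t + 1`. -/
inductive WFF : PForm → Prop
  | bot : WFF .bot
  | neg {φ} : WFF φ → WFF (.neg φ)
  | conj {φ ψ} : WFF φ → WFF ψ → WFF (.conj φ ψ)
  | all (i : ℤ) (φ : PForm) :
      (∀ n : ℕ, WFF (openF 0 (.atom (i, n)) φ)) → WFF (.all i φ)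
  | mem {t s} : WFT t → WFT s → levelT s = levelT t + 1 → WFF (.mem t s)
end

mutual
/-- The rewrite relation on terms: closure of the head rewrite under contexts. -/
inductive RwT : PTerm → PTerm → Prop
  | compr {i φ φ'} : RwF φ φ' → RwT (.compr i φ) (.compr i φ')
/-- The rewrite relation on formulae: `t ∈ {a | φ} → φ[a := t]`, closed under
all syntactic contexts. -/
inductive RwF : PForm → PForm → Prop
  | head (t : PTerm) (i : ℤ) (φ : PForm) :
      RwF (.mem t (.compr i φ)) (openF 0 t φ)
  | neg {φ φ'} : RwF φ φ' → RwF (.neg φ) (.neg φ')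
  | conjL {φ φ' ψ} : RwF φ φ' → RwF (.conj φ ψ) (.conj φ' ψ)
  | conjR {φ ψ ψ'} : RwF ψ ψ' → RwF (.conj φ ψ) (.conj φ ψ')
  | all {i φ φ'} : RwF φ φ' → RwF (.all i φ) (.all i φ')
  | memL {t t' s} : RwT t t' → RwF (.mem t s) (.mem t' s)
  | memR {t s s'} : RwT s s' → RwF (.mem t s) (.mem t s')
end

mutual
/-- Capture-avoiding substitution of the term `u` for the atom `a` in a term. -/
def substT (a : Atom) (u : PTerm) : PTerm → PTerm
  | .atom b => if b = a then u else .atom b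
  | .bvar j => .bvar j
  | .compr i φ => .compr i (substF a u φ)
/-- Capture-avoiding substitution of the term `u` for the atom `a` in a formula. -/
def substF (a : Atom) (u : PTerm) : PForm → PForm
  | .bot => .bot
  | .neg φ => .neg (substF a u φ)
  | .conj φ ψ => .conj (substF a u φ) (substF a u ψ)
  | .all i φ => .all i (substF a u φ)
  | .mem t s => .mem (substT a u t) (substT a u s)
end

mutual
/-- Number of occurrences of the bound variable `k` in a term. -/
def countBT (k : ℕ) : PTerm → ℕ
  | .atom _ => 0
  | .bvar j => if j = k then 1 else 0
  | .compr _ φ => countBF (k+1) φ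
/-- Number of occurrences of the bound variable `k` in a formula. -/
def countBF (k : ℕ) : PForm → ℕ
  | .bot => 0
  | .neg φ => countBF k φ
  | .conj φ ψ => countBF k φ + countBF k ψ
  | .all _ φ => countBF (k+1) φ
  | .mem t s => countBT k t + countBT k s
end

mutual
/-- Number of free occurrences of the atom `a` in a term. -/
def countAT (a : Atom) : PTerm → ℕ
  | .atom b => if b = a then 1 else 0
  | .bvar _ => 0
  | .compr _ φ => countAF a φ
/-- Number of free occurrences of the atom `a` in a formula. -/
def countAF (a : Atom) : PForm → ℕ
  | .bot => 0
  | .neg φ => countAF a φ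
  | .conj φ ψ => countAF a φ + countAF a ψ
  | .all _ φ => countAF a φ
  | .mem t s => countAT a t + countAT a s
end

mutual
/-- A term is ternary when every comprehension in it binds a variable which
occurs at least three times in its body. -/
def TernT : PTerm → Prop
  | .atom _ => True
  | .bvar _ => True
  | .compr _ φ => 3 ≤ countBF 0 φ ∧ TernF φ
/-- A formula is ternary when every comprehension in it binds a variable which
occurs at least three times in its body. -/
def TernF : PForm → Prop
  | .bot => True
  | .neg φ => TernF φ
  | .conj φ ψ => TernF φ ∧ TernF ψ
  | .all _ φ => TernF φ
  | .mem t s => TernT t ∧ TernT s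
end

/-- Whether a term is an atom (a variable). -/
def isAtomLike : PTerm → Bool
  | .atom _ => true
  | .bvar _ => true
  | .compr _ _ => false

/-- Whether a term is a comprehension. -/
def isCompr : PTerm → Bool
  | .compr _ _ => true
  | _ => false

mutual
/-- Complexity of a term. -/
def complexityT : PTerm → ℕ
  | .atom _ => 1
  | .bvar _ => 1
  | .compr _ φ => 1 + complexityF φ
/-- Complexity of a formula; note `complexity (b ∈ {a | φ}) = complexity φ`
for an atom `b` (and `complexityT {a | φ} - 1 = complexity φ`). -/
def complexityF : PForm → ℕ
  | .bot => 3
  | .neg φ => 1 + complexityF φ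
  | .conj φ ψ => complexityF φ + 1 + complexityF ψ
  | .all _ φ => 1 + complexityF φ
  | .mem t s =>
      if isAtomLike t && isCompr s then complexityT s - 1
      else complexityT t + 1 + complexityT s
end

mutual
/-- The number of atomic reducts in a term. -/
def atomicT : PTerm → ℕ
  | .atom _ => 0
  | .bvar _ => 0
  | .compr _ φ => atomicF φ
/-- The number of atomic reducts in a formula; note
`atomic (b ∈ {a | φ}) = atomic φ + 1 = atomicT {a | φ} + 1` for an atom `b`. -/
def atomicF : PForm → ℕ
  | .bot => 0
  | .neg φ => atomicF φ
  | .conj φ ψ => atomicF φ + atomicF ψ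
  | .all _ φ => atomicF φ
  | .mem t s =>
      if isAtomLike t && isCompr s then atomicT s + 1
      else atomicT t + atomicT s
end

mutual
theorem compT_pos : ∀ t, 1 ≤ complexityT t
  | .atom _ => by simp [complexityT]
  | .bvar _ => by simp [complexityT]
  | .compr _ φ => by simp [complexityT]
theorem compF_ge3 : ∀ φ, 3 ≤ complexityF φ
  | .bot => le_refl 3
  | .neg φ => by have := compF_ge3 φ; simp [complexityF]; omega
  | .conj φ ψ => by have := compF_ge3 φ; have := compF_ge3 ψ; simp [complexityF]; omega
  | .all _ φ => by have := compF_ge3 φ; simp [complexityF]; omega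
  | .mem t (.compr i χ) => by
      have h1 := compF_ge3 χ
      have ht := compT_pos t
      simp only [complexityF, complexityT]
      split <;> omega
  | .mem t (.atom a) => by
      have ht := compT_pos t
      simp only [complexityF, complexityT, isCompr, Bool.and_false]
      simp; omega
  | .mem t (.bvar j) => by
      have ht := compT_pos t
      simp only [complexityF, complexityT, isCompr, Bool.and_false]
      simp; omega
end

theorem countBT_atomlike_le (k : ℕ) : ∀ t, isAtomLike t = true → countBT k t ≤ 1
  | .atom _, _ => by simp [countBT]
  | .bvar j, _ => by simp [countBT]; split <;> omega

mutual
theorem ternF_big : ∀ φ, TernF φ → ∀ k, 3 ≤ countBF k φ → 7 ≤ complexityF φ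
  | .bot => by intro _ k hk; simp [countBF] at hk
  | .neg φ => fun h k hk => by
      have := ternF_big φ h k (by simpa [countBF] using hk)
      simp [complexityF]; omega
  | .conj φ ψ => fun h k hk => by
      have h1 := compF_ge3 φ; have h2 := compF_ge3 ψ
      simp [complexityF]; omega
  | .all i φ => fun h k hk => by
      have := ternF_big φ h (k+1) (by simpa [countBF] using hk)
      simp [complexityF]; omega
  | .mem t (.compr i χ) => fun h k hk => by
      have h8 : 8 ≤ complexityT (.compr i χ) := ternT_big _ h.2 rfl
      have ht := compT_pos t
      simp only [complexityF]
      split <;> omega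
  | .mem (.compr p q) (.atom a) => fun h k hk => by
      have h8 : 8 ≤ complexityT (.compr p q) := ternT_big _ h.1 rfl
      simp only [complexityT] at h8
      simp only [complexityF, isAtomLike, Bool.false_and, Bool.false_eq_true,
        if_false, complexityT]
      omega
  | .mem (.compr p q) (.bvar j) => fun h k hk => by
      have h8 : 8 ≤ complexityT (.compr p q) := ternT_big _ h.1 rfl
      simp only [complexityT] at h8
      simp only [complexityF, isAtomLike, Bool.false_and, Bool.false_eq_true,
        if_false, complexityT]
      omega
  | .mem (.atom a) (.atom b) => fun h k hk => by simp [countBF, countBT] at hk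
  | .mem (.atom a) (.bvar j) => fun h k hk => by
      simp [countBF, countBT] at hk; split at hk <;> omega
  | .mem (.bvar l) (.atom b) => fun h k hk => by
      simp [countBF, countBT] at hk; split at hk <;> omega
  | .mem (.bvar l) (.bvar j) => fun h k hk => by
      simp [countBF, countBT] at hk; split at hk <;> split at hk <;> omega
theorem ternT_big : ∀ t, TernT t → isCompr t = true → 8 ≤ complexityT t
  | .atom _ => fun _ h => by simp [isCompr] at h
  | .bvar _ => fun _ h => by simp [isCompr] at h
  | .compr i φ => fun h _ => by
      have := ternF_big φ h.2 0 h.1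
      simp [complexityT]; omega
end

theorem atomlike_not_compr : ∀ u, isAtomLike u = true → isCompr u = false
  | .atom _, _ => rfl
  | .bvar _, _ => rfl

theorem atomlike_comp : ∀ u, isAtomLike u = true → complexityT u = 1
  | .atom _, _ => rfl
  | .bvar _, _ => rfl

theorem atomlike_atomic : ∀ u, isAtomLike u = true → atomicT u = 0
  | .atom _, _ => rfl
  | .bvar _, _ => rfl

theorem open_isAtomLike (k : ℕ) (u : PTerm) (hu : isAtomLike u = true) :
    ∀ t, isAtomLike (openT k u t) = isAtomLike t
  | .atom _ => rfl
  | .bvar j => by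
      simp only [openT]; split
      · simpa [isAtomLike] using hu
      · rfl
  | .compr _ _ => rfl

theorem open_isCompr (k : ℕ) (u : PTerm) (hu : isAtomLike u = true) :
    ∀ t, isCompr (openT k u t) = isCompr t
  | .atom _ => rfl
  | .bvar j => by
      simp only [openT]; split
      · simpa [isCompr] using atomlike_not_compr u hu
      · rfl
  | .compr _ _ => rfl

mutual
theorem openT_comp_atomlike (k : ℕ) (u : PTerm) (hu : isAtomLike u = true) :
    ∀ t, complexityT (openT k u t) = complexityT t
  | .atom _ => rfl
  | .bvar j => by
      simp only [openT]; split
      · simp [atomlike_comp u hu, complexityT]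
      · rfl
  | .compr i φ => by
      simp only [openT, complexityT, openF_comp_atomlike (k+1) u hu φ]
theorem openF_comp_atomlike (k : ℕ) (u : PTerm) (hu : isAtomLike u = true) :
    ∀ φ, complexityF (openF k u φ) = complexityF φ
  | .bot => rfl
  | .neg φ => by simp only [openF, complexityF, openF_comp_atomlike k u hu φ]
  | .conj φ ψ => by
      simp only [openF, complexityF, openF_comp_atomlike k u hu φ,
        openF_comp_atomlike k u hu ψ]
  | .all i φ => by simp only [openF, complexityF, openF_comp_atomlike (k+1) u hu φ]
  | .mem t s => by
      simp only [openF, complexityF, open_isAtomLike k u hu t, open_isCompr k u hu s,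
        openT_comp_atomlike k u hu t, openT_comp_atomlike k u hu s]
end

mutual
theorem openT_atomic_atomlike (k : ℕ) (u : PTerm) (hu : isAtomLike u = true) :
    ∀ t, atomicT (openT k u t) = atomicT t
  | .atom _ => rfl
  | .bvar j => by
      simp only [openT]; split
      · simp [atomlike_atomic u hu, atomicT]
      · rfl
  | .compr i φ => by
      simp only [openT, atomicT, openF_atomic_atomlike (k+1) u hu φ]
theorem openF_atomic_atomlike (k : ℕ) (u : PTerm) (hu : isAtomLike u = true) :
    ∀ φ, atomicF (openF k u φ) = atomicF φ
  | .bot => rfl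
  | .neg φ => by simp only [openF, atomicF, openF_atomic_atomlike k u hu φ]
  | .conj φ ψ => by
      simp only [openF, atomicF, openF_atomic_atomlike k u hu φ,
        openF_atomic_atomlike k u hu ψ]
  | .all i φ => by simp only [openF, atomicF, openF_atomic_atomlike (k+1) u hu φ]
  | .mem t s => by
      simp only [openF, atomicF, open_isAtomLike k u hu t, open_isCompr k u hu s,
        openT_atomic_atomlike k u hu t, openT_atomic_atomlike k u hu s]
end

theorem compr_ge4 : ∀ u, isCompr u = true → 4 ≤ complexityT u
  | .compr i φ, _ => by have := compF_ge3 φ; simp [complexityT]; omega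

theorem compr_not_atomlike : ∀ u, isCompr u = true → isAtomLike u = false
  | .compr _ _, _ => rfl

mutual
theorem openT_comp_ge (k : ℕ) (u : PTerm) (hu : isCompr u = true) :
    ∀ t, complexityT t + countBT k t * complexityT u
      ≤ complexityT (openT k u t) + 4 * countBT k t
  | .atom a => by simp [openT, countBT]
  | .bvar j => by
      have h4 := compr_ge4 u hu
      rcases eq_or_ne j k with h | h
      · subst h; simp [openT, countBT, complexityT]; omega
      · simp [openT, countBT, h]
  | .compr i φ => by
      have ih := openF_comp_ge (k+1) u hu φ
      simp only [openT, countBT, complexityT]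
      omega
theorem openF_comp_ge (k : ℕ) (u : PTerm) (hu : isCompr u = true) :
    ∀ φ, complexityF φ + countBF k φ * complexityT u
      ≤ complexityF (openF k u φ) + 4 * countBF k φ
  | .bot => by simp [openF, countBF]
  | .neg φ => by
      have ih := openF_comp_ge k u hu φ
      simp only [openF, countBF, complexityF]
      omega
  | .conj φ ψ => by
      have ih1 := openF_comp_ge k u hu φ
      have ih2 := openF_comp_ge k u hu ψ
      simp only [openF, countBF, complexityF, Nat.add_mul]
      omega
  | .all i φ => by
      have ih := openF_comp_ge (k+1) u hu φ
      simp only [openF, countBF, complexityF]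
      omega
  | .mem (.atom a) (.atom b) => by simp [openF, openT, countBF, countBT]
  | .mem (.atom a) (.bvar j) => by
      have h4 := compr_ge4 u hu
      rcases eq_or_ne j k with h | h
      · subst h
        simp only [openF, openT, countBF, countBT, complexityF, complexityT,
          if_pos rfl, eq_self_iff_true, if_true]
        try simp only [hu]
        simp [isAtomLike, isCompr, Nat.add_mul]
        omega
      · simp [openF, openT, countBF, countBT, h]
  | .mem (.atom a) (.compr i χ) => by
      have ih := openF_comp_ge (k+1) u hu χ
      simp only [openF, openT, countBF, countBT, complexityF, complexityT]
      simp [isAtomLike, isCompr, Nat.add_mul]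
      omega
  | .mem (.bvar j) (.atom b) => by
      have h4 := compr_ge4 u hu
      have hau := compr_not_atomlike u hu
      rcases eq_or_ne j k with h | h
      · subst h
        simp only [openF, openT, countBF, countBT, complexityF, complexityT,
          if_pos rfl, eq_self_iff_true, if_true]
        try simp only [hau]
        simp [isAtomLike, isCompr, Nat.add_mul]
        omega
      · simp [openF, openT, countBF, countBT, h]
  | .mem (.bvar j) (.bvar l) => by
      have h4 := compr_ge4 u hu
      have hau := compr_not_atomlike u hu
      rcases eq_or_ne j k with h | h <;> rcases eq_or_ne l k with h' | h'
      · subst h; subst h'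
        simp only [openF, openT, countBF, countBT, complexityF, complexityT,
          if_pos rfl, eq_self_iff_true, if_true]
        try simp only [hau]
        simp [isAtomLike, isCompr, Nat.add_mul]
        omega
      · subst h
        simp only [openF, openT, countBF, countBT, complexityF, complexityT,
          if_pos rfl, if_neg h', eq_self_iff_true, if_true]
        try simp only [hau]
        simp [isAtomLike, isCompr, Nat.add_mul]
        omega
      · subst h'
        simp only [openF, openT, countBF, countBT, complexityF, complexityT,
          if_pos rfl, if_neg h, eq_self_iff_true, if_true]
        try simp only [hu]
        simp [isAtomLike, isCompr, Nat.add_mul]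
        omega
      · simp [openF, openT, countBF, countBT, h, h']
  | .mem (.bvar j) (.compr i χ) => by
      have ih := openF_comp_ge (k+1) u hu χ
      have h4 := compr_ge4 u hu
      have hau := compr_not_atomlike u hu
      rcases eq_or_ne j k with h | h
      · subst h
        simp only [openF, openT, countBF, countBT, complexityF, complexityT,
          if_pos rfl, eq_self_iff_true, if_true]
        try simp only [hau]
        simp [isAtomLike, isCompr, Nat.add_mul]
        omega
      · simp only [openF, openT, countBF, countBT, complexityF, complexityT,
          if_neg h]
        simp [isAtomLike, isCompr, Nat.add_mul]
        omega
  | .mem (.compr p q) s => by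
      have ih1 := openF_comp_ge (k+1) u hu q
      have ih2 := openT_comp_ge k u hu s
      simp only [openF, openT, countBF, countBT, complexityF, complexityT,
        isAtomLike, Bool.false_and, Bool.false_eq_true, if_false, Nat.add_mul]
      omega
end

/-- Abbreviation for the formula-level conclusion. -/
def XF (φ φ' : PForm) : Prop :=
  Xor' (complexityF φ < complexityF φ')
    (complexityF φ' = complexityF φ ∧ atomicF φ' < atomicF φ)

/-- Abbreviation for the term-level conclusion. -/
def XT (t t' : PTerm) : Prop :=
  Xor' (complexityT t < complexityT t')
    (complexityT t' = complexityT t ∧ atomicT t' < atomicT t)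

theorem case_head (t : PTerm) (i : ℤ) (φ : PForm)
    (h : TernF (.mem t (.compr i φ))) : XF (.mem t (.compr i φ)) (openF 0 t φ) := by
  simp only [TernF, TernT] at h
  obtain ⟨ht, hcnt, hφ⟩ := h
  match t with
  | .atom a =>
      have e1 := openF_comp_atomlike 0 (.atom a) rfl φ
      have e2 := openF_atomic_atomlike 0 (.atom a) rfl φ
      have h3 := compF_ge3 φ
      unfold XF Xor' Xor
      simp only [complexityF, atomicF, complexityT, atomicT, isAtomLike,
        isCompr, Bool.and_self, Bool.true_and, if_true]
      omega
  | .bvar j =>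
      have e1 := openF_comp_atomlike 0 (.bvar j) rfl φ
      have e2 := openF_atomic_atomlike 0 (.bvar j) rfl φ
      have h3 := compF_ge3 φ
      unfold XF Xor' Xor
      simp only [complexityF, atomicF, complexityT, atomicT, isAtomLike,
        isCompr, Bool.and_self, Bool.true_and, if_true]
      omega
  | .compr p q =>
      have h8 : 8 ≤ complexityT (.compr p q) := ternT_big _ ht rfl
      have hO := openF_comp_ge 0 (.compr p q) rfl φ
      have h1 : 3 * (complexityT (.compr p q) - 4)
          ≤ countBF 0 φ * (complexityT (.compr p q) - 4) :=
        Nat.mul_le_mul_right _ hcnt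
      have h2 : countBF 0 φ * (complexityT (.compr p q) - 4) + countBF 0 φ * 4
          = countBF 0 φ * complexityT (.compr p q) := by
        rw [← Nat.mul_add]; congr 1; omega
      unfold XF Xor' Xor
      simp only [complexityF, atomicF, complexityT, atomicT, isAtomLike,
        isCompr, Bool.false_and, Bool.false_eq_true, if_false] at *
      generalize countBF 0 φ * (1 + complexityF q - 4) = m at h1 h2
      generalize countBF 0 φ * (1 + complexityF q) = m' at h2 hO
      omega

theorem case_compr {i : ℤ} {φ φ' : PForm} (ih : TernF φ → XF φ φ')
    (h : TernT (.compr i φ)) : XT (.compr i φ) (.compr i φ') := by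
  simp only [TernT] at h
  have := ih h.2
  unfold XF Xor' Xor at this
  unfold XT Xor' Xor
  simp only [complexityT, atomicT]
  omega

theorem case_neg {φ φ' : PForm} (ih : TernF φ → XF φ φ')
    (h : TernF (.neg φ)) : XF (.neg φ) (.neg φ') := by
  simp only [TernF] at h
  have := ih h
  unfold XF Xor' Xor at this ⊢
  simp only [complexityF, atomicF]
  omega

theorem case_conjL {φ φ' ψ : PForm} (ih : TernF φ → XF φ φ')
    (h : TernF (.conj φ ψ)) : XF (.conj φ ψ) (.conj φ' ψ) := by
  simp only [TernF] at h
  have := ih h.1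
  unfold XF Xor' Xor at this ⊢
  simp only [complexityF, atomicF]
  omega

theorem case_conjR {φ ψ ψ' : PForm} (ih : TernF ψ → XF ψ ψ')
    (h : TernF (.conj φ ψ)) : XF (.conj φ ψ) (.conj φ ψ') := by
  simp only [TernF] at h
  have := ih h.2
  unfold XF Xor' Xor at this ⊢
  simp only [complexityF, atomicF]
  omega

theorem case_all {i : ℤ} {φ φ' : PForm} (ih : TernF φ → XF φ φ')
    (h : TernF (.all i φ)) : XF (.all i φ) (.all i φ') := by
  simp only [TernF] at h
  have := ih h
  unfold XF Xor' Xor at this ⊢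
  simp only [complexityF, atomicF]
  omega

theorem case_memL {t t' s : PTerm} (a : RwT t t') (ih : TernT t → XT t t')
    (h : TernF (.mem t s)) : XF (.mem t s) (.mem t' s) := by
  simp only [TernF] at h
  have := ih h.1
  match a with
  | .compr (i := i) (φ := q) (φ' := q') r =>
      unfold XT Xor' Xor at this
      unfold XF Xor' Xor
      simp only [complexityT, atomicT] at this
      simp only [complexityF, atomicF, complexityT, atomicT, isAtomLike,
        Bool.false_and, Bool.false_eq_true, if_false]
      omega

theorem case_memR {t s s' : PTerm} (a : RwT s s') (ih : TernT s → XT s s')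
    (h : TernF (.mem t s)) : XF (.mem t s) (.mem t s') := by
  simp only [TernF] at h
  have := ih h.2
  match a with
  | .compr (i := i) (φ := q) (φ' := q') r =>
      unfold XT Xor' Xor at this
      unfold XF Xor' Xor
      simp only [complexityT, atomicT] at this
      cases hat : isAtomLike t <;>
        simp only [complexityF, atomicF, complexityT, atomicT, hat, isCompr,
          Bool.false_and, Bool.true_and, Bool.false_eq_true, Bool.and_self,
          if_false, if_true] <;> omega

theorem mainF {φ φ' : PForm} (r : RwF φ φ') : TernF φ → XF φ φ' :=
  RwF.rec (motive_1 := fun t t' _ => TernT t → XT t t')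
    (motive_2 := fun φ φ' _ => TernF φ → XF φ φ')
    (fun _ ih h => case_compr ih h)
    (fun t i φ h => case_head t i φ h)
    (fun _ ih h => case_neg ih h)
    (fun _ ih h => case_conjL ih h)
    (fun _ ih h => case_conjR ih h)
    (fun _ ih h => case_all ih h)
    (fun a ih h => case_memL a ih h)
    (fun a ih h => case_memR a ih h)
    r

theorem mainT {t t' : PTerm} (r : RwT t t') : TernT t → XT t t' :=
  RwT.rec (motive_1 := fun t t' _ => TernT t → XT t t')
    (motive_2 := fun φ φ' _ => TernF φ → XF φ φ')
    (fun _ ih h => case_compr ih h)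
    (fun t i φ h => case_head t i φ h)
    (fun _ ih h => case_neg ih h)
    (fun _ ih h => case_conjL ih h)
    (fun _ ih h => case_conjR ih h)
    (fun _ ih h => case_all ih h)
    (fun a ih h => case_memL a ih h)
    (fun a ih h => case_memR a ih h)
    r
/-- A rewrite of a ternary stratified formula (or term) either strictly
increases complexity, or else preserves complexity and strictly decreases the
number of atomic reducts — and exactly one of these alternatives holds. -/
theorem rw_complexity_or_atomic :
    (∀ φ φ' : PForm, WFF φ → TernF φ → RwF φ φ' →
        Xor' (complexityF φ < complexityF φ')
          (complexityF φ' = complexityF φ ∧ atomicF φ' < atomicF φ)) ∧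
      (∀ t t' : PTerm, WFT t → TernT t → RwT t t' →
        Xor' (complexityT t < complexityT t')
          (complexityT t' = complexityT t ∧ atomicT t' < atomicT t)) :=
  ⟨fun _ _ _ h r => mainF r h, fun _ _ _ h r => mainT r h⟩
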